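/- For any permutation classes C and D whose upper growth rates limsup_{n→∞} |C_n|^{1/n} and limsup_{n→∞} |D_n|^{1/n} are finite, the upper growth rate of their merge satisfies limsup_{n→∞} |(C⊙D)_n|^{1/n} ≤ (√(limsup_{n→∞} |C_n|^{1/n}) + √(limsup_{n→∞} |D_n|^{1/n}))². -/

import Mathlib

open Filter Topology ENNReal

/-- A permutation of length `n`, in one-line notation `π 0, π 1, …, π (n-1)`. -/
abbrev Perm (n : ℕ) := Equiv.Perm (Fin n)

/-- `Pattern σ π` : the permutation `σ` is contained in `π`, i.e. some subsequence of `π`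
is order isomorphic to `σ`. -/
def Pattern {k n : ℕ} (σ : Perm k) (π : Perm n) : Prop :=
  ∃ f : Fin k ↪o Fin n, ∀ i j : Fin k, σ i < σ j ↔ π (f i) < π (f j)

/-- A permutation class: a set of permutations closed downwards under containment. -/
structure PermClass where
  mem : ∀ n, Set (Perm n)
  closed : ∀ {k n : ℕ} (σ : Perm k) (π : Perm n), π ∈ mem n → Pattern σ π → σ ∈ mem k

/-- The entries of `π` at the positions in `A` form a sequence order isomorphic
to a member of the family `F`. -/
def SubpermIn {n : ℕ} (π : Perm n) (A : Set (Fin n)) (F : ∀ m, Set (Perm m)) : Prop :=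
  ∃ (m : ℕ) (σ : Perm m) (f : Fin m ↪o Fin n),
    Set.range ⇑f = A ∧ (∀ i j : Fin m, σ i < σ j ↔ π (f i) < π (f j)) ∧ σ ∈ F m

/-- The merge `C ⊙ D`: permutations whose entries can be partitioned into a subsequence
order isomorphic to a member of `C` and one order isomorphic to a member of `D`. -/
def mergeSet (C D : ∀ m, Set (Perm m)) (n : ℕ) : Set (Perm n) :=
  {π | ∃ A : Set (Fin n), SubpermIn π A C ∧ SubpermIn π Aᶜ D}

/-- `|F_n| ^ (1/n)` as a real number. -/
noncomputable def growthSeq (F : ∀ m, Set (Perm m)) (n : ℕ) : ℝ :=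
  ((F n).ncard : ℝ) ^ ((n : ℝ)⁻¹)

/-- The family `F` has (finite) proper growth rate `g`. -/
def HasGrowth (F : ∀ m, Set (Perm m)) (g : ℝ) : Prop :=
  Tendsto (growthSeq F) atTop (𝓝 g)

/-- `|F_n| ^ (1/n)` in the extended nonnegative reals. -/
noncomputable def eGrowthSeq (F : ∀ m, Set (Perm m)) (n : ℕ) : ℝ≥0∞ :=
  ((F n).ncard : ℝ≥0∞) ^ ((n : ℝ)⁻¹)

/-- The upper growth rate `limsup |F_n|^(1/n)`. -/
noncomputable def ugr (F : ∀ m, Set (Perm m)) : ℝ≥0∞ := limsup (eGrowthSeq F) atTop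

/-- The lower growth rate `liminf |F_n|^(1/n)`. -/
noncomputable def lgr (F : ∀ m, Set (Perm m)) : ℝ≥0∞ := liminf (eGrowthSeq F) atTop

/-- The direct sum `π ⊕ σ` of two permutations. -/
def dsum {m n : ℕ} (π : Perm m) (σ : Perm n) : Perm (m + n) :=
  finSumFinEquiv.symm.trans ((Equiv.sumCongr π σ).trans finSumFinEquiv)

/-- The skew sum `π ⊖ σ` of two permutations. -/
def skewSum {m n : ℕ} (π : Perm m) (σ : Perm n) : Perm (m + n) :=
  finSumFinEquiv.symm.trans ((Equiv.sumCongr π σ).trans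
    (((Equiv.sumComm (Fin m) (Fin n)).trans finSumFinEquiv).trans (finCongr (Nat.add_comm n m))))

/-- A family of permutations is sum closed if it is closed under `⊕`. -/
def SumClosed (F : ∀ m, Set (Perm m)) : Prop :=
  ∀ {m n : ℕ} (π : Perm m) (σ : Perm n), π ∈ F m → σ ∈ F n → dsum π σ ∈ F (m + n)

/-- A family of permutations is skew closed if it is closed under `⊖`. -/
def SkewClosed (F : ∀ m, Set (Perm m)) : Prop :=
  ∀ {m n : ℕ} (π : Perm m) (σ : Perm n), π ∈ F m → σ ∈ F n → skewSum π σ ∈ F (m + n)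

/-- The class of an empty (blocked) grid cell: only the empty permutation. -/
def emptyCell : ∀ m, Set (Perm m) := fun m => {_π | m = 0}

/-- The set of positions of `π` lying in column `k` and row `ℓ` of the gridding
determined by the column divisions `c` and row divisions `r`. -/
def cellSet {n : ℕ} (π : Perm n) (c r : ℕ → ℕ) (k ℓ : ℕ) : Set (Fin n) :=
  {i | c k ≤ (i : ℕ) ∧ (i : ℕ) < c (k + 1) ∧ r ℓ ≤ (π i : ℕ) ∧ (π i : ℕ) < r (ℓ + 1)}

/-- The grid class of an (infinite) matrix `M` of families of permutations, where
`M k ℓ` is the cell in column `k`, row `ℓ` (Cartesian coordinates, indexed from 0). -/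
def gridSet (M : ℕ → ℕ → ∀ m, Set (Perm m)) (n : ℕ) : Set (Perm n) :=
  {π | ∃ c r : ℕ → ℕ, Monotone c ∧ Monotone r ∧ c 0 = 0 ∧ r 0 = 0 ∧
    (∀ k, c k ≤ n) ∧ (∀ ℓ, r ℓ ≤ n) ∧ (∃ k, c k = n) ∧ (∃ ℓ, r ℓ = n) ∧
    ∀ k ℓ, cellSet π c r k ℓ = ∅ ∨ SubpermIn π (cellSet π c r k ℓ) (M k ℓ)}

/-- The matrix of the infinite increasing `(C, D)` staircase: cell in column `i`, row `i`
is `C`, cell in column `i+1`, row `i` is `D`, all other cells empty. -/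
def incStairM (C D : ∀ m, Set (Perm m)) : ℕ → ℕ → ∀ m, Set (Perm m) :=
  fun k ℓ => if k = ℓ then C else if k = ℓ + 1 then D else emptyCell

/-- The decreasing permutation `k (k-1) ⋯ 2 1` of length `k`. -/
def delta (k : ℕ) : Perm k := ⟨Fin.rev, Fin.rev, Fin.rev_rev, Fin.rev_rev⟩

/-- The class of permutations avoiding the pattern `τ`. -/
def avSet {k : ℕ} (τ : Perm k) : ∀ n, Set (Perm n) := fun n => {π | ¬ Pattern τ π}

/-- The shape of an infinite `(C,D)` staircase: `pos j` is the (column, row) position of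
the `(j+1)`-st cell; odd-indexed steps share a row with their predecessor, even-indexed
steps share a column with their predecessor, and no other sharing of rows or columns occurs. -/
structure StaircaseData where
  pos : ℕ → ℕ × ℕ
  inj : Function.Injective pos
  rowEq : ∀ i, (pos (2 * i + 1)).2 = (pos (2 * i)).2
  colEq : ∀ i, (pos (2 * i + 2)).1 = (pos (2 * i + 1)).1
  rowOnly : ∀ j j', (pos j).2 = (pos j').2 → j / 2 = j' / 2
  colOnly : ∀ j j', (pos j).1 = (pos j').1 → (j + 1) / 2 = (j' + 1) / 2

open Classical in
/-- The matrix of the infinite `(C,D)` staircase with shape `S`: the odd-numbered cells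
(cells `1, 3, 5, …`, i.e. `pos 0, pos 2, …`) are `C`, the even-numbered cells are `D`. -/
noncomputable def StaircaseData.M (S : StaircaseData) (C D : ∀ m, Set (Perm m)) :
    ℕ → ℕ → ∀ m, Set (Perm m) :=
  fun k ℓ => if ∃ i, S.pos (2 * i) = (k, ℓ) then C
    else if ∃ i, S.pos (2 * i + 1) = (k, ℓ) then D else emptyCell

open Classical in
/-- The matrix of the `t`-step restriction of the staircase: only the first `2t` cells. -/
noncomputable def StaircaseData.Mstep (S : StaircaseData) (C D : ∀ m, Set (Perm m)) (t : ℕ) :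
    ℕ → ℕ → ∀ m, Set (Perm m) :=
  fun k ℓ => if ∃ i < t, S.pos (2 * i) = (k, ℓ) then C
    else if ∃ i < t, S.pos (2 * i + 1) = (k, ℓ) then D else emptyCell

lemma perm_eq_of_iff {k : ℕ} (σ τ : Perm k) (h : ∀ i j, σ i < σ j ↔ τ i < τ j) : σ = τ := by
  haveI : WellFoundedLT (Fin k) := inferInstance
  have hmono : StrictMono (⇑σ ∘ ⇑τ.symm) := by
    intro a b hab
    have : τ (τ.symm a) < τ (τ.symm b) := by simpa using hab
    exact (h _ _).mpr this
  have hid : StrictMono (id : Fin k → Fin k) := strictMono_id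
  have hr : Set.range (⇑σ ∘ ⇑τ.symm) = Set.range (id : Fin k → Fin k) := by
    simp [Set.range_comp, Set.range_eq_univ.2 τ.symm.surjective,
      Set.image_univ, Set.range_eq_univ.2 σ.surjective]
  have hfg := Set.range_injOn_strictMono hmono hid hr
  ext i
  have h2 := congrFun hfg (τ i)
  simp only [Function.comp_apply, Equiv.symm_apply_apply, id] at h2
  exact congrArg Fin.val h2

section Std
variable {n k : ℕ} (π : Perm n) (A : Finset (Fin n))

lemma card_image_perm (hk : A.card = k) : (A.image π).card = k := by
  rw [Finset.card_image_of_injective _ π.injective, hk]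

/-- standardization of π restricted to positions A -/
noncomputable def std (hk : A.card = k) : Perm k := by
  refine Equiv.ofBijective
    (fun i => ((A.image ⇑π).orderIsoOfFin (card_image_perm π A hk)).symm
      ⟨π (A.orderEmbOfFin hk i), Finset.mem_image_of_mem _ (Finset.orderEmbOfFin_mem A hk i)⟩)
    (Finite.injective_iff_bijective.mp ?_)
  intro i j hij
  have := congrArg (((A.image ⇑π).orderIsoOfFin (card_image_perm π A hk))) hij
  simp only [OrderIso.apply_symm_apply, Subtype.mk.injEq] at this
  exact (A.orderEmbOfFin hk).injective (π.injective this)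

lemma std_lt_iff (hk : A.card = k) (i j : Fin k) :
    std π A hk i < std π A hk j ↔ π (A.orderEmbOfFin hk i) < π (A.orderEmbOfFin hk j) := by
  rw [std]
  simp only [Equiv.ofBijective_apply]
  rw [← OrderIso.lt_iff_lt ((A.image ⇑π).orderIsoOfFin (card_image_perm π A hk))]
  simp [Subtype.mk_lt_mk]

lemma std_recover (hk : A.card = k) (i : Fin k) :
    (((A.image ⇑π).orderIsoOfFin (card_image_perm π A hk)) (std π A hk i) : Fin n)
      = π (A.orderEmbOfFin hk i) := by
  rw [std]
  simp

lemma std_mem (hk : A.card = k) {F : ∀ m, Set (Perm m)} (h : SubpermIn π (↑A) F) : std π A hk ∈ F k := by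
  obtain ⟨m, σ, f, hrange, hpatt, hmem⟩ := h
  have hcard : m = k := by
    have h1 : (Set.range ⇑f).ncard = m := by
      rw [Set.ncard_eq_toFinset_card', Set.toFinset_range]
      rw [Finset.card_image_of_injective _ f.injective, Finset.card_univ, Fintype.card_fin]
    rw [hrange, Set.ncard_coe_finset, hk] at h1
    omega
  subst hcard
  have hf : ⇑f = ⇑(A.orderEmbOfFin hk) := by
    have : ∀ x, f x ∈ A := by
      intro x
      have : f x ∈ Set.range ⇑f := Set.mem_range_self x
      rw [hrange] at this; exact this
    exact Finset.orderEmbOfFin_unique hk this f.strictMono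
  have : σ = std π A hk := by
    apply perm_eq_of_iff
    intro i j
    rw [hpatt i j, std_lt_iff, hf]
  rwa [this] at hmem
end Std

lemma image_compl {n : ℕ} (π : Perm n) (A : Finset (Fin n)) :
    Aᶜ.image ⇑π = (A.image ⇑π)ᶜ := by
  ext y
  simp only [Finset.mem_image, Finset.mem_compl]
  constructor
  · rintro ⟨x, hx, rfl⟩ ⟨x', hx', hxx⟩
    exact hx (π.injective hxx ▸ hx')
  · intro h
    exact ⟨π.symm y, fun hmem => h ⟨π.symm y, hmem, by simp⟩, by simp⟩

lemma orderEmbOfFin_congr {α : Type*} [LinearOrder α] {s t : Finset α} (h : s = t) {k : ℕ}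
    (hs : s.card = k) (ht : t.card = k) (i : Fin k) :
    s.orderEmbOfFin hs i = t.orderEmbOfFin ht i := by subst h; rfl

lemma std_recover' {n k : ℕ} (π : Perm n) (A : Finset (Fin n)) (hk : A.card = k) (i : Fin k) :
    π (A.orderEmbOfFin hk i)
      = (A.image ⇑π).orderEmbOfFin (card_image_perm π A hk) (std π A hk i) := by
  exact ((Finset.coe_orderIsoOfFin_apply _ _ _).symm.trans (std_recover π A hk i)).symm

lemma count_bound (C D : ∀ m, Set (Perm m)) (n : ℕ) :
    (mergeSet C D n).ncard ≤
      ∑ k ∈ Finset.range (n+1),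
        n.choose k * (n.choose k * ((C k).ncard * (D (n-k)).ncard)) := by
  classical
  set SA : Finset (Fin n) → Finset (Perm n) := fun A =>
    Finset.univ.filter (fun π => SubpermIn π ↑A C ∧ SubpermIn π ↑(Aᶜ) D) with hSA
  have hsub : mergeSet C D n ⊆ ↑(Finset.univ.biUnion SA) := by
    intro π hπ
    obtain ⟨A₀, h1, h2⟩ := hπ
    refine Finset.mem_coe.mpr (Finset.mem_biUnion.mpr ⟨A₀.toFinset, Finset.mem_univ _, ?_⟩)
    rw [hSA]
    simp only [Finset.mem_filter, Finset.mem_univ, true_and]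
    constructor
    · rwa [Set.coe_toFinset]
    · rwa [Finset.coe_compl, Set.coe_toFinset]
  have h1 : (mergeSet C D n).ncard ≤ (Finset.univ.biUnion SA).card := by
    have := Set.ncard_le_ncard hsub (Set.toFinite _)
    rwa [Set.ncard_coe_finset] at this
  have h2 : ∀ A : Finset (Fin n), (SA A).card ≤
      n.choose A.card * ((C A.card).ncard * (D (n - A.card)).ncard) := by
    intro A
    have hcc : Aᶜ.card = n - A.card := by
      rw [Finset.card_compl, Fintype.card_fin]
    set E : Perm n → Finset (Fin n) × Perm A.card × Perm (n - A.card) := fun π =>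
      (A.image ⇑π, std π A rfl, std π Aᶜ hcc) with hE
    have hTc := Set.toFinite (C A.card)
    have hTd := Set.toFinite (D (n - A.card))
    have hmaps : ∀ π ∈ SA A, E π ∈
        (Finset.powersetCard A.card (Finset.univ : Finset (Fin n))) ×ˢ
          (hTc.toFinset ×ˢ hTd.toFinset) := by
      intro π hπ
      rw [hSA] at hπ
      simp only [Finset.mem_filter, Finset.mem_univ, true_and] at hπ
      simp only [hE, Finset.mem_product, Finset.mem_powersetCard_univ, Set.Finite.mem_toFinset]
      exact ⟨card_image_perm π A rfl, std_mem π A rfl hπ.1, std_mem π Aᶜ hcc hπ.2⟩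
    have hinj : Set.InjOn E ↑(SA A) := by
      intro π hπ π' hπ' hEE
      rw [hE] at hEE
      simp only [Prod.mk.injEq] at hEE
      obtain ⟨hB, hs1, hs2⟩ := hEE
      ext x
      by_cases hx : x ∈ A
      · have : x ∈ Set.range ⇑(A.orderEmbOfFin (rfl : A.card = A.card)) := by
          rw [Finset.range_orderEmbOfFin]; exact hx
        obtain ⟨i, rfl⟩ := this
        rw [std_recover' π A rfl i, std_recover' π' A rfl i, hs1]
        exact congrArg Fin.val
          (orderEmbOfFin_congr hB (card_image_perm π A rfl) (card_image_perm π' A rfl) _)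
      · have hx' : x ∈ Aᶜ := Finset.mem_compl.mpr hx
        have : x ∈ Set.range ⇑(Aᶜ.orderEmbOfFin hcc) := by
          rw [Finset.range_orderEmbOfFin]; exact hx'
        obtain ⟨i, rfl⟩ := this
        rw [std_recover' π Aᶜ hcc i, std_recover' π' Aᶜ hcc i, hs2]
        have hBc : Aᶜ.image ⇑π = Aᶜ.image ⇑π' := by
          rw [image_compl, image_compl, hB]
        exact congrArg Fin.val
          (orderEmbOfFin_congr hBc (card_image_perm π Aᶜ hcc) (card_image_perm π' Aᶜ hcc) _)
    have := Finset.card_le_card_of_injOn E hmaps hinj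
    calc (SA A).card ≤ _ := this
      _ = n.choose A.card * ((C A.card).ncard * (D (n - A.card)).ncard) := by
        rw [Finset.card_product, Finset.card_product, Finset.card_powersetCard,
          Finset.card_univ, Fintype.card_fin]
        rw [← Set.ncard_eq_toFinset_card _ hTc, ← Set.ncard_eq_toFinset_card _ hTd]
  calc (mergeSet C D n).ncard ≤ (Finset.univ.biUnion SA).card := h1
    _ ≤ ∑ A : Finset (Fin n), (SA A).card := Finset.card_biUnion_le
    _ ≤ ∑ A : Finset (Fin n),
        n.choose A.card * ((C A.card).ncard * (D (n - A.card)).ncard) :=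
      Finset.sum_le_sum (fun A _ => h2 A)
    _ = ∑ k ∈ Finset.range (n+1),
        n.choose k * (n.choose k * ((C k).ncard * (D (n-k)).ncard)) := by
      rw [← Finset.powerset_univ]
      rw [Finset.sum_powerset_apply_card
        (fun k => n.choose k * ((C k).ncard * (D (n-k)).ncard))]
      simp [Finset.card_univ, smul_eq_mul]


lemma growth_bound (F : ∀ m, Set (Perm m)) (c' : ℝ≥0∞) (h : ugr F < c')
    (hct : c' ≠ ⊤) :
    ∃ M : ℝ≥0∞, 1 ≤ M ∧ M ≠ ⊤ ∧ ∀ n, ((F n).ncard : ℝ≥0∞) ≤ M * c' ^ n := by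
  have hc0 : c' ≠ 0 := (lt_of_le_of_lt zero_le h).ne'
  obtain ⟨N, hN⟩ := (Filter.eventually_atTop).mp (Filter.eventually_lt_of_limsup_lt h)
  set N' := max N 1 with hN'
  have htail : ∀ n, N' ≤ n → ((F n).ncard : ℝ≥0∞) ≤ c' ^ n := by
    intro n hn
    have h1 : ((F n).ncard : ℝ≥0∞) ^ ((n : ℝ)⁻¹) ≤ c' :=
      (hN n (le_trans (le_max_left _ _) hn)).le
    have hn0 : (n : ℝ) ≠ 0 := by
      have : (1:ℕ) ≤ n := le_trans (le_max_right _ _) hn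
      have : 0 < n := this
      exact_mod_cast this.ne'
    have h2 := ENNReal.rpow_le_rpow h1 (Nat.cast_nonneg n)
    rwa [← ENNReal.rpow_mul, inv_mul_cancel₀ hn0, ENNReal.rpow_one,
      ENNReal.rpow_natCast] at h2
  refine ⟨(∑ m ∈ Finset.range N', ((F m).ncard : ℝ≥0∞) * (c'⁻¹) ^ m) + 1,
    le_add_self, ?_, ?_⟩
  · refine ENNReal.add_ne_top.mpr ⟨?_, ENNReal.one_ne_top⟩
    rw [← lt_top_iff_ne_top, ENNReal.sum_lt_top]
    intro m _
    exact ENNReal.mul_lt_top (ENNReal.natCast_lt_top _)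
      (ENNReal.pow_lt_top (ENNReal.inv_lt_top.mpr (pos_iff_ne_zero.mpr hc0)))
  · intro n
    rcases le_or_gt N' n with hn | hn
    · calc ((F n).ncard : ℝ≥0∞) ≤ c' ^ n := htail n hn
        _ = 1 * c' ^ n := (one_mul _).symm
        _ ≤ _ * c' ^ n := by gcongr; exact le_add_self
    · have hmem : n ∈ Finset.range N' := Finset.mem_range.mpr hn
      have h1 : ((F n).ncard : ℝ≥0∞) * (c'⁻¹) ^ n ≤
          ∑ m ∈ Finset.range N', ((F m).ncard : ℝ≥0∞) * (c'⁻¹) ^ m :=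
        Finset.single_le_sum (f := fun m => ((F m).ncard : ℝ≥0∞) * (c'⁻¹) ^ m) (fun _ _ => zero_le) hmem
      calc ((F n).ncard : ℝ≥0∞)
          = ((F n).ncard : ℝ≥0∞) * ((c'⁻¹) ^ n * c' ^ n) := by
            rw [← mul_pow, ENNReal.inv_mul_cancel hc0 hct, one_pow, mul_one]
        _ = (((F n).ncard : ℝ≥0∞) * (c'⁻¹) ^ n) * c' ^ n := by ring
        _ ≤ (∑ m ∈ Finset.range N', ((F m).ncard : ℝ≥0∞) * (c'⁻¹) ^ m) * c' ^ n :=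
            mul_le_mul_left h1 _
        _ ≤ ((∑ m ∈ Finset.range N', ((F m).ncard : ℝ≥0∞) * (c'⁻¹) ^ m) + 1) * c' ^ n :=
            mul_le_mul_left le_self_add _

lemma tendsto_rpow_natInv_one {M : ℝ≥0∞} (h1 : M ≠ 0) (h2 : M ≠ ⊤) :
    Tendsto (fun n : ℕ => M ^ ((n : ℝ)⁻¹)) atTop (𝓝 1) := by
  have hexp : Tendsto (fun n : ℕ => (n : ℝ)⁻¹) atTop (𝓝 0) :=
    tendsto_inv_atTop_nhds_zero_nat
  set m : NNReal := M.toNNReal with hm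
  have hM : M = ↑m := (ENNReal.coe_toNNReal h2).symm
  have hm0 : m ≠ 0 := by
    rw [hm]; simpa [ENNReal.toNNReal_eq_zero_iff, h2] using h1
  have hmr : (m : ℝ) ≠ 0 := by exact_mod_cast hm0
  have hreal : Tendsto (fun n : ℕ => ((m : ℝ)) ^ ((n : ℝ)⁻¹)) atTop (𝓝 1) := by
    have := (Real.continuousAt_const_rpow (b := 0) hmr).tendsto.comp hexp
    simpa [Real.rpow_zero, Function.comp_def] using this
  have hnn : Tendsto (fun n : ℕ => m ^ ((n : ℝ)⁻¹)) atTop (𝓝 1) := by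
    rw [← NNReal.tendsto_coe]
    simpa [NNReal.coe_rpow] using hreal
  rw [hM]
  have := (ENNReal.tendsto_coe (f := atTop)).mpr hnn
  simpa [ENNReal.coe_rpow_of_ne_zero hm0] using this

lemma ugr_merge_le_of_lt (C D : ∀ m, Set (Perm m)) (c' d' : ℝ≥0∞)
    (hc : ugr C < c') (hd : ugr D < d') (hct : c' ≠ ⊤) (hdt : d' ≠ ⊤) :
    ugr (mergeSet C D) ≤ (c' ^ (2⁻¹:ℝ) + d' ^ (2⁻¹:ℝ)) ^ 2 := by
  obtain ⟨Mc, hMc1, hMct, hMc⟩ := growth_bound C c' hc hct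
  obtain ⟨Md, hMd1, hMdt, hMd⟩ := growth_bound D d' hd hdt
  set x := c' ^ (2⁻¹:ℝ) with hxdef
  set y := d' ^ (2⁻¹:ℝ) with hydef
  set K := (x + y) ^ 2 with hKdef
  set M := Mc * Md with hMdef
  have hx2 : x ^ 2 = c' := by
    rw [hxdef, ← ENNReal.rpow_natCast (c' ^ (2⁻¹:ℝ)) 2, ← ENNReal.rpow_mul]
    norm_num
  have hy2 : y ^ 2 = d' := by
    rw [hydef, ← ENNReal.rpow_natCast (d' ^ (2⁻¹:ℝ)) 2, ← ENNReal.rpow_mul]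
    norm_num
  have key : ∀ n, ((mergeSet C D n).ncard : ℝ≥0∞) ≤ M * K ^ n := by
    intro n
    have hnat := count_bound C D n
    have hcast : ((mergeSet C D n).ncard : ℝ≥0∞) ≤
        ∑ k ∈ Finset.range (n+1), (n.choose k : ℝ≥0∞) *
          ((n.choose k : ℝ≥0∞) * (((C k).ncard : ℝ≥0∞) * ((D (n-k)).ncard : ℝ≥0∞))) := by
      have := (Nat.cast_le (α := ℝ≥0∞)).mpr hnat
      refine le_trans this (le_of_eq ?_)
      push_cast
      rfl
    set a : ℕ → ℝ≥0∞ := fun k => (n.choose k : ℝ≥0∞) * x ^ k * y ^ (n - k) with hadef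
    have hsummand : ∀ k, (n.choose k : ℝ≥0∞) *
        ((n.choose k : ℝ≥0∞) * (((C k).ncard : ℝ≥0∞) * ((D (n-k)).ncard : ℝ≥0∞)))
          ≤ M * (a k) ^ 2 := by
      intro k
      have h1 : ((C k).ncard : ℝ≥0∞) ≤ Mc * c' ^ k := hMc k
      have h2 : ((D (n-k)).ncard : ℝ≥0∞) ≤ Md * d' ^ (n-k) := hMd (n-k)
      calc (n.choose k : ℝ≥0∞) *
          ((n.choose k : ℝ≥0∞) * (((C k).ncard : ℝ≥0∞) * ((D (n-k)).ncard : ℝ≥0∞)))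
          ≤ (n.choose k : ℝ≥0∞) *
            ((n.choose k : ℝ≥0∞) * ((Mc * c' ^ k) * (Md * d' ^ (n-k)))) := by gcongr
        _ = M * ((n.choose k : ℝ≥0∞) ^ 2 * c' ^ k * d' ^ (n-k)) := by
            rw [hMdef]; ring
        _ = M * (a k) ^ 2 := by
            rw [hadef]
            simp only []
            rw [mul_pow, mul_pow, ← pow_mul x, ← pow_mul y,
              mul_comm k 2, mul_comm (n-k) 2, pow_mul x, pow_mul y, hx2, hy2]
    have hsum_a : ∑ k ∈ Finset.range (n+1), a k = (x + y) ^ n := by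
      rw [add_pow]
      refine Finset.sum_congr rfl fun k _ => ?_
      rw [hadef]; ring
    have hcauchy : ∑ k ∈ Finset.range (n+1), (a k) ^ 2 ≤
        (∑ k ∈ Finset.range (n+1), a k) ^ 2 := by
      rw [sq (∑ k ∈ Finset.range (n+1), a k), Finset.sum_mul]
      refine Finset.sum_le_sum fun k hk => ?_
      rw [sq]
      exact mul_le_mul_right (Finset.single_le_sum (f := a) (fun _ _ => zero_le) hk) _
    calc ((mergeSet C D n).ncard : ℝ≥0∞) ≤ _ := hcast
      _ ≤ ∑ k ∈ Finset.range (n+1), M * (a k) ^ 2 :=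
          Finset.sum_le_sum fun k _ => hsummand k
      _ = M * ∑ k ∈ Finset.range (n+1), (a k) ^ 2 := by rw [Finset.mul_sum]
      _ ≤ M * (∑ k ∈ Finset.range (n+1), a k) ^ 2 := mul_le_mul_right hcauchy _
      _ = M * ((x + y) ^ n) ^ 2 := by rw [hsum_a]
      _ = M * K ^ n := by rw [hKdef, ← pow_mul, ← pow_mul, mul_comm n 2]
  have hM0 : M ≠ 0 := by
    rw [hMdef]
    exact mul_ne_zero (by intro h; simp [h] at hMc1) (by intro h; simp [h] at hMd1)
  have hMt : M ≠ ⊤ := ENNReal.mul_ne_top hMct hMdt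
  have hev : ∀ᶠ n in atTop, eGrowthSeq (mergeSet C D) n ≤ M ^ ((n:ℝ)⁻¹) * K := by
    refine Filter.eventually_atTop.mpr ⟨1, fun n hn => ?_⟩
    have hn0 : (n : ℝ) ≠ 0 := by
      have : 0 < n := hn
      exact_mod_cast this.ne'
    have h1 : eGrowthSeq (mergeSet C D) n ≤ (M * K ^ n) ^ ((n:ℝ)⁻¹) :=
      ENNReal.rpow_le_rpow (by exact_mod_cast key n) (by positivity)
    rwa [ENNReal.mul_rpow_of_nonneg _ _ (by positivity), ← ENNReal.rpow_natCast K n,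
      ← ENNReal.rpow_mul, mul_inv_cancel₀ hn0, ENNReal.rpow_one] at h1
  have htend : Tendsto (fun n : ℕ => M ^ ((n:ℝ)⁻¹) * K) atTop (𝓝 K) := by
    have := ENNReal.Tendsto.mul_const (tendsto_rpow_natInv_one hM0 hMt)
      (Or.inl one_ne_zero) (b := K)
    simpa using this
  calc ugr (mergeSet C D) ≤ limsup (fun n : ℕ => M ^ ((n:ℝ)⁻¹) * K) atTop :=
        Filter.limsup_le_limsup hev
    _ = K := htend.limsup_eq

/-- If the upper growth rates of `C` and `D` are finite, then
`limsup |(C⊙D)_n|^(1/n) ≤ (√(limsup |C_n|^(1/n)) + √(limsup |D_n|^(1/n)))²`. -/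
theorem merge_upper_growth_le (C D : PermClass)
    (hC : ugr C.mem ≠ ⊤) (hD : ugr D.mem ≠ ⊤) :
    ugr (mergeSet C.mem D.mem) ≤
      (ugr C.mem ^ (2⁻¹ : ℝ) + ugr D.mem ^ (2⁻¹ : ℝ)) ^ 2 := by
  set c := ugr C.mem with hc
  set d := ugr D.mem with hd
  have hstep : ∀ j : ℕ, 1 ≤ j → ugr (mergeSet C.mem D.mem) ≤
      ((c + (j:ℝ≥0∞)⁻¹) ^ (2⁻¹:ℝ) + (d + (j:ℝ≥0∞)⁻¹) ^ (2⁻¹:ℝ)) ^ 2 := by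
    intro j hj
    have hjne : ((j:ℝ≥0∞))⁻¹ ≠ 0 := ENNReal.inv_ne_zero.mpr (ENNReal.natCast_ne_top j)
    have hjnt : ((j:ℝ≥0∞))⁻¹ ≠ ⊤ := by
      rw [ne_eq, ENNReal.inv_eq_top]
      exact_mod_cast Nat.one_le_iff_ne_zero.mp hj
    exact ugr_merge_le_of_lt C.mem D.mem _ _
      (ENNReal.lt_add_right hC hjne) (ENNReal.lt_add_right hD hjne)
      (ENNReal.add_ne_top.mpr ⟨hC, hjnt⟩) (ENNReal.add_ne_top.mpr ⟨hD, hjnt⟩)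
  have h0 : Tendsto (fun j : ℕ => ((j:ℝ≥0∞))⁻¹) atTop (𝓝 0) :=
    ENNReal.tendsto_inv_nat_nhds_zero
  have hcc : Tendsto (fun j : ℕ => c + ((j:ℝ≥0∞))⁻¹) atTop (𝓝 c) := by
    have := h0.const_add c
    simpa using this
  have hdd : Tendsto (fun j : ℕ => d + ((j:ℝ≥0∞))⁻¹) atTop (𝓝 d) := by
    have := h0.const_add d
    simpa using this
  have hrc : Tendsto (fun j : ℕ => (c + ((j:ℝ≥0∞))⁻¹) ^ (2⁻¹:ℝ)) atTop (𝓝 (c ^ (2⁻¹:ℝ))) :=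
    ((ENNReal.continuous_rpow_const (y := (2⁻¹:ℝ))).continuousAt.tendsto).comp hcc
  have hrd : Tendsto (fun j : ℕ => (d + ((j:ℝ≥0∞))⁻¹) ^ (2⁻¹:ℝ)) atTop (𝓝 (d ^ (2⁻¹:ℝ))) :=
    ((ENNReal.continuous_rpow_const (y := (2⁻¹:ℝ))).continuousAt.tendsto).comp hdd
  have hsum : Tendsto (fun j : ℕ => (c + ((j:ℝ≥0∞))⁻¹) ^ (2⁻¹:ℝ) + (d + ((j:ℝ≥0∞))⁻¹) ^ (2⁻¹:ℝ))
      atTop (𝓝 (c ^ (2⁻¹:ℝ) + d ^ (2⁻¹:ℝ))) := hrc.add hrd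
  have hfin : Tendsto (fun j : ℕ =>
      ((c + ((j:ℝ≥0∞))⁻¹) ^ (2⁻¹:ℝ) + (d + ((j:ℝ≥0∞))⁻¹) ^ (2⁻¹:ℝ)) ^ 2)
      atTop (𝓝 ((c ^ (2⁻¹:ℝ) + d ^ (2⁻¹:ℝ)) ^ 2)) :=
    ((ENNReal.continuous_pow 2).continuousAt.tendsto).comp hsum
  exact ge_of_tendsto hfin (Filter.eventually_atTop.mpr ⟨1, hstep⟩)
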